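/- Suppose F(·,x,a) has bounded variation along x̄ uniformly over A, let δ̄>0 and ε̄>0 satisfy η^δ̄_ε̄(T) < ∞, and assume (C1) and (C2). Then for every δ ∈ (0,δ̄) and every δ' ∈ (0,δ): η^{δ'}(T) ≤ lim_{T'↑T} η^δ(T') + sup{ d_H(F(T,x,a), F(T⁻,x,a)) : x ∈ x̄(T)+δ𝔹, a ∈ A }, where F(T⁻,x,a) denotes the set-valued left limit of F(·,x,a) at T. -/

import Mathlib

open Set Metric Filter MeasureTheory Pointwise
open scoped ENNReal Topology

noncomputable section

/-- Euclidean `n`-space `ℝⁿ`. -/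
abbrev En (n : ℕ) : Type := EuclideanSpace ℝ (Fin n)

/-- A partition `{t₀ = S, t₁, …, t_N = t}` of the interval `[S, t]`. -/
structure IntervalPartition (S t : ℝ) where
  N : ℕ
  pts : ℕ → ℝ
  hN : 0 < N
  first : pts 0 = S
  last : pts N = t
  mono : ∀ i, i < N → pts i < pts (i + 1)

/-- `diam(𝒯) ≤ ε` : every subinterval of the partition has length at most `ε`. -/
def IntervalPartition.diamLE {S t : ℝ} (P : IntervalPartition S t) (ε : ℝ) : Prop :=
  ∀ i, i < P.N → P.pts (i + 1) - P.pts i ≤ ε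

/-- The sum `I^δ(𝒯) = Σᵢ sup { d_H(F(tᵢ₊₁,x,a), F(tᵢ,x,a)) :
x ∈ x̄([tᵢ,tᵢ₊₁]) + δ𝔹, a ∈ A }` for a multifunction `F` along `x̄`, uniformly over `A`. -/
noncomputable def mvSum {n k : ℕ} (F : ℝ → En n → En k → Set (En n))
    (xbar : ℝ → En n) (A : Set (En k)) (δ : ℝ) {S t : ℝ} (P : IntervalPartition S t) : ℝ≥0∞ :=
  ∑ i ∈ Finset.range P.N,
    ⨆ x ∈ xbar '' Set.Icc (P.pts i) (P.pts (i + 1)) + Metric.closedBall (0 : En n) δ,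
      ⨆ a ∈ A, EMetric.hausdorffEdist (F (P.pts (i + 1)) x a) (F (P.pts i) x a)

/-- The `(δ,ε)`-perturbed cumulative variation function `η^δ_ε(t)`:
the supremum of `I^δ(𝒯)` over partitions `𝒯` of `[S,t]` with `diam(𝒯) ≤ ε`.
(For `t = S` there are no partitions and the value is `0`.) -/
noncomputable def mvEtaEps {n k : ℕ} (F : ℝ → En n → En k → Set (En n))
    (xbar : ℝ → En n) (A : Set (En k)) (δ ε : ℝ) (S t : ℝ) : ℝ≥0∞ :=
  ⨆ (P : IntervalPartition S t) (_ : P.diamLE ε), mvSum F xbar A δ P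

/-- The `δ`-perturbed cumulative variation function `η^δ(t) = lim_{ε↓0} η^δ_ε(t)`
(the limit of the decreasing-in-`ε` family equals the infimum). -/
noncomputable def mvEtaDelta {n k : ℕ} (F : ℝ → En n → En k → Set (En n))
    (xbar : ℝ → En n) (A : Set (En k)) (δ : ℝ) (S t : ℝ) : ℝ≥0∞ :=
  ⨅ (ε : ℝ) (_ : 0 < ε), mvEtaEps F xbar A δ ε S t

/-- The cumulative variation function `η(t) = lim_{δ↓0} η^δ(t)`. -/
noncomputable def mvEta {n k : ℕ} (F : ℝ → En n → En k → Set (En n))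
    (xbar : ℝ → En n) (A : Set (En k)) (S t : ℝ) : ℝ≥0∞ :=
  ⨅ (δ : ℝ) (_ : 0 < δ), mvEtaDelta F xbar A δ S t

/-- `F(·,x,a)` has bounded variation along `x̄` uniformly over `A` : `η(T) < ∞`. -/
def HasBVAlongUniformly {n k : ℕ} (F : ℝ → En n → En k → Set (En n))
    (xbar : ℝ → En n) (A : Set (En k)) (S T : ℝ) : Prop :=
  mvEta F xbar A S T < ⊤

/-- Hypothesis (C1): nonempty closed values, measurability in `t` (Castaing-type
characterization via distance functions), and uniform boundedness near `x̄`. -/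
def HypC1 {n k : ℕ} (F : ℝ → En n → En k → Set (En n))
    (xbar : ℝ → En n) (A : Set (En k)) (S T δbar : ℝ) : Prop :=
  (∀ t ∈ Set.Icc S T, ∀ x : En n, ∀ a ∈ A, (F t x a).Nonempty ∧ IsClosed (F t x a)) ∧
  (∀ x : En n, ∀ a ∈ A, ∀ v : En n,
      Measurable fun t : ℝ => EMetric.infEdist v (F t x a)) ∧
  (∃ c : ℝ, 0 < c ∧ ∀ t ∈ Set.Icc S T, ∀ x ∈ Metric.closedBall (xbar t) δbar, ∀ a ∈ A,
      F t x a ⊆ Metric.closedBall (0 : En n) c)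

/-- Hypothesis (C2): uniform continuity of `(x,a) ↦ F(t,x,a)` near `x̄`,
with a modulus of continuity `γ`. -/
def HypC2 {n k : ℕ} (F : ℝ → En n → En k → Set (En n))
    (xbar : ℝ → En n) (A : Set (En k)) (S T δbar : ℝ) : Prop :=
  ∃ γ : ℝ → ℝ, (∀ s, 0 ≤ γ s) ∧ Tendsto γ (𝓝[>] (0 : ℝ)) (𝓝 0) ∧
    ∀ t ∈ Set.Icc S T, ∀ x ∈ Metric.closedBall (xbar t) δbar,
      ∀ x' ∈ Metric.closedBall (xbar t) δbar, ∀ a ∈ A, ∀ a' ∈ A,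
        F t x a ⊆ F t x' a' + Metric.closedBall (0 : En n) (γ (‖x - x'‖ + ‖a - a'‖))

/-- The Kuratowski upper limit of a family of sets along a filter `l`. -/
def kLimsup {α : Type*} [PseudoEMetricSpace α] (l : Filter ℝ) (G : ℝ → Set α) : Set α :=
  {v | ∀ ε : ℝ≥0∞, 0 < ε → ∃ᶠ s in l, EMetric.infEdist v (G s) < ε}

/-- The Kuratowski lower limit of a family of sets along a filter `l`. -/
def kLiminf {α : Type*} [PseudoEMetricSpace α] (l : Filter ℝ) (G : ℝ → Set α) : Set α :=
  {v | Tendsto (fun s => EMetric.infEdist v (G s)) l (𝓝 0)}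

/-- The set-valued limit along `l` exists: upper and lower Kuratowski limits coincide. -/
def KLimExists {α : Type*} [PseudoEMetricSpace α] (l : Filter ℝ) (G : ℝ → Set α) : Prop :=
  kLimsup l G = kLiminf l G

/-- The set-valued right limit `F(s̄⁺, x, a) = lim_{s ↓ s̄} F(s,x,a)` (with `s ∈ (s̄,T]`). -/
def rightLim {n k : ℕ} (F : ℝ → En n → En k → Set (En n)) (T sbar : ℝ)
    (x : En n) (a : En k) : Set (En n) :=
  kLiminf (𝓝[Set.Ioc sbar T] sbar) fun s => F s x a

/-- The set-valued left limit `F(t̄⁻, x, a) = lim_{t ↑ t̄} F(t,x,a)` (with `t ∈ [S,t̄)`). -/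
def leftLim {n k : ℕ} (F : ℝ → En n → En k → Set (En n)) (S tbar : ℝ)
    (x : En n) (a : En k) : Set (En n) :=
  kLiminf (𝓝[Set.Ico S tbar] tbar) fun s => F s x a

section Helpers

/-! ### IntervalPartition basics -/

theorem ppts_mono {S t : ℝ} (P : IntervalPartition S t) : ∀ {i j : ℕ}, i ≤ j → j ≤ P.N →
    P.pts i ≤ P.pts j := by
  intro i j hij hj
  induction j with
  | zero => simp_all
  | succ m ih =>
    rcases Nat.lt_or_ge i (m+1) with h | h
    · exact le_trans (ih (Nat.lt_succ_iff.mp h) (le_trans (Nat.le_succ m) hj))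
        (P.mono m (Nat.lt_of_succ_le hj)).le
    · have : i = m + 1 := le_antisymm hij h
      simp [this]

theorem ppts_lt {S t : ℝ} (P : IntervalPartition S t) {i j : ℕ} (hij : i < j) (hj : j ≤ P.N) :
    P.pts i < P.pts j := by
  have h1 : P.pts i ≤ P.pts (j-1) := ppts_mono P (Nat.le_sub_one_of_lt hij) (le_trans (Nat.sub_le j 1) hj)
  have h2 : P.pts (j-1) < P.pts j := by
    have hj1 : j - 1 + 1 = j := by omega
    have := P.mono (j-1) (by omega)
    rwa [hj1] at this
  exact lt_of_le_of_lt h1 h2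

theorem IntervalPartition.S_lt {S t : ℝ} (P : IntervalPartition S t) : S < t := by
  have := ppts_lt P P.hN le_rfl
  rwa [P.first, P.last] at this

theorem ppts_mem {S t : ℝ} (P : IntervalPartition S t) {i : ℕ} (hi : i ≤ P.N) :
    P.pts i ∈ Set.Icc S t := by
  constructor
  · have := ppts_mono P (Nat.zero_le i) hi; rwa [P.first] at this
  · have := ppts_mono P hi le_rfl; rwa [P.last] at this

/-! ### Uniform partitions -/

/-- Points of the uniform subdivision of `[s,s']` into `m` pieces. -/
def unifpts (s s' : ℝ) (m : ℕ) (j : ℕ) : ℝ := s + j * ((s' - s) / m)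

theorem unifpts_zero (s s' : ℝ) (m : ℕ) : unifpts s s' m 0 = s := by simp [unifpts]

theorem unifpts_last (s s' : ℝ) {m : ℕ} (hm : 0 < m) : unifpts s s' m m = s' := by
  have : (m : ℝ) ≠ 0 := Nat.cast_ne_zero.mpr hm.ne'
  rw [unifpts, mul_div_cancel₀ (s' - s) this]; ring

theorem unifpts_step (s s' : ℝ) (m : ℕ) (j : ℕ) :
    unifpts s s' m (j+1) - unifpts s s' m j = (s' - s) / m := by
  simp only [unifpts]; push_cast; ring

theorem unifpts_mono {s s' : ℝ} (hss' : s < s') {m : ℕ} (hm : 0 < m) {i j : ℕ} (hij : i ≤ j) :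
    unifpts s s' m i ≤ unifpts s s' m j := by
  have h : (0:ℝ) ≤ (s' - s) / m := by
    apply div_nonneg (by linarith) (Nat.cast_nonneg m)
  simp only [unifpts]
  have : (i:ℝ) ≤ (j:ℝ) := Nat.cast_le.mpr hij
  nlinarith

theorem unifpts_mem {s s' : ℝ} (hss' : s < s') {m : ℕ} (hm : 0 < m) {j : ℕ} (hj : j ≤ m) :
    unifpts s s' m j ∈ Set.Icc s s' := by
  constructor
  · have := unifpts_mono hss' hm (Nat.zero_le j); rwa [unifpts_zero] at this
  · have := unifpts_mono hss' hm hj; rwa [unifpts_last s s' hm] at this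

/-- The uniform partition of `[s,s']` into `m` pieces. -/
def unifP (s s' : ℝ) (hss' : s < s') (m : ℕ) (hm : 0 < m) : IntervalPartition s s' where
  N := m
  pts := unifpts s s' m
  hN := hm
  first := unifpts_zero s s' m
  last := unifpts_last s s' hm
  mono := by
    intro i _
    have h : (0:ℝ) < (s' - s) / m := by
      apply div_pos (by linarith) (Nat.cast_pos.mpr hm)
    have := unifpts_step s s' m i
    linarith

theorem unifP_diamLE {s s' : ℝ} (hss' : s < s') {m : ℕ} (hm : 0 < m) {ε : ℝ}
    (h : (s' - s) / m ≤ ε) : (unifP s s' hss' m hm).diamLE ε := by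
  intro i _
  have := unifpts_step s s' m i
  simpa [unifP, this]

theorem exists_nat_div_le {c ε : ℝ} (hc : 0 ≤ c) (hε : 0 < ε) :
    ∃ m : ℕ, 0 < m ∧ c / m ≤ ε := by
  obtain ⟨m, hm⟩ := exists_nat_gt (c / ε)
  have hm0 : 0 < m := by
    by_contra h
    push_neg at h
    interval_cases m
    · simp at hm; nlinarith [div_nonneg hc hε.le]
  refine ⟨m, hm0, ?_⟩
  rw [div_le_iff₀ (Nat.cast_pos.mpr hm0)]
  have := (div_lt_iff₀ hε).mp hm
  linarith

end Helpers
section TM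
variable {n k : ℕ} (F : ℝ → En n → En k → Set (En n)) (xbar : ℝ → En n) (A : Set (En k))

/-- The single-interval supremum term. -/
noncomputable def tm (δ s s' : ℝ) : ℝ≥0∞ :=
  ⨆ x ∈ xbar '' Set.Icc s s' + Metric.closedBall (0 : En n) δ,
    ⨆ a ∈ A, EMetric.hausdorffEdist (F s' x a) (F s x a)

theorem mvSum_eq_sum_tm (δ : ℝ) {S t : ℝ} (P : IntervalPartition S t) :
    mvSum F xbar A δ P = ∑ i ∈ Finset.range P.N, tm F xbar A δ (P.pts i) (P.pts (i + 1)) := rfl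

/-! ### Appending a uniform subdivision to a partition -/

/-- Extend a partition of `[S,s]` by a uniform `m`-piece subdivision of `[s,s']`. -/
def IntervalPartition.app {S s : ℝ} (P : IntervalPartition S s) (s' : ℝ) (hss' : s < s') (m : ℕ) (hm : 0 < m) :
    IntervalPartition S s' where
  N := P.N + m
  pts := fun i => if i ≤ P.N then P.pts i else unifpts s s' m (i - P.N)
  hN := by omega
  first := by simp [P.first]
  last := by
    have h1 : ¬ (P.N + m ≤ P.N) := by omega
    simp only [h1, if_false, Nat.add_sub_cancel_left, unifpts_last s s' hm]
  mono := by
    intro i hi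
    rcases Nat.lt_or_ge i P.N with h | h
    · have h1 : i ≤ P.N := h.le
      have h2 : i + 1 ≤ P.N := h
      simp only [h1, h2, if_true]
      exact P.mono i h
    · rcases Nat.eq_or_lt_of_le h with h' | h'
      · subst h'
        have h2 : ¬ (P.N + 1 ≤ P.N) := by omega
        simp only [le_rfl, h2, if_true, if_false]
        have h3 : P.N + 1 - P.N = 1 := by omega
        rw [h3, P.last]
        have := unifpts_step s s' m 0
        rw [unifpts_zero] at this
        have hpos : (0:ℝ) < (s' - s)/m := div_pos (by linarith) (Nat.cast_pos.mpr hm)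
        simp only [zero_add] at this
        linarith
      · have h1 : ¬ (i ≤ P.N) := by omega
        have h2 : ¬ (i + 1 ≤ P.N) := by omega
        simp only [h1, h2, if_false]
        have h3 : i + 1 - P.N = (i - P.N) + 1 := by omega
        rw [h3]
        have := unifpts_step s s' m (i - P.N)
        have hpos : (0:ℝ) < (s' - s)/m := div_pos (by linarith) (Nat.cast_pos.mpr hm)
        linarith

theorem IntervalPartition.app_pts_of_le {S s : ℝ} (P : IntervalPartition S s) {s' : ℝ} (hss' : s < s')
    {m : ℕ} (hm : 0 < m) {i : ℕ} (hi : i ≤ P.N) :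
    (P.app s' hss' m hm).pts i = P.pts i := by
  simp [IntervalPartition.app, hi]

theorem IntervalPartition.app_pts_add {S s : ℝ} (P : IntervalPartition S s) {s' : ℝ} (hss' : s < s')
    {m : ℕ} (hm : 0 < m) (j : ℕ) :
    (P.app s' hss' m hm).pts (P.N + j) = unifpts s s' m j := by
  rcases Nat.eq_zero_or_pos j with h | h
  · subst h
    simp [IntervalPartition.app, P.last, unifpts_zero]
  · have h1 : ¬ (P.N + j ≤ P.N) := by omega
    simp [IntervalPartition.app, h1]

theorem IntervalPartition.app_diamLE {S s : ℝ} (P : IntervalPartition S s) {s' : ℝ} (hss' : s < s')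
    {m : ℕ} (hm : 0 < m) {ε : ℝ} (hP : P.diamLE ε) (h : (s' - s) / m ≤ ε) :
    (P.app s' hss' m hm).diamLE ε := by
  intro i hi
  rcases Nat.lt_or_ge i P.N with hlt | hge
  · rw [P.app_pts_of_le hss' hm hlt.le, P.app_pts_of_le hss' hm hlt]
    exact hP i hlt
  · obtain ⟨j, rfl⟩ : ∃ j, i = P.N + j := ⟨i - P.N, by omega⟩
    have e1 := P.app_pts_add hss' hm j
    have e2 := P.app_pts_add hss' hm (j+1)
    rw [show P.N + j + 1 = P.N + (j + 1) by omega] at *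
    rw [e1, e2, unifpts_step]
    exact h

theorem mvSum_app (δ : ℝ) {S s : ℝ} (P : IntervalPartition S s) {s' : ℝ} (hss' : s < s')
    {m : ℕ} (hm : 0 < m) :
    mvSum F xbar A δ (P.app s' hss' m hm)
      = mvSum F xbar A δ P
        + ∑ j ∈ Finset.range m, tm F xbar A δ (unifpts s s' m j) (unifpts s s' m (j+1)) := by
  rw [mvSum_eq_sum_tm, mvSum_eq_sum_tm]
  show ∑ i ∈ Finset.range (P.N + m), _ = _
  rw [Finset.sum_range_add]
  congr 1
  · apply Finset.sum_congr rfl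
    intro i hi
    rw [Finset.mem_range] at hi
    rw [P.app_pts_of_le hss' hm hi.le, P.app_pts_of_le hss' hm hi]
  · apply Finset.sum_congr rfl
    intro j _
    rw [show P.N + j + 1 = P.N + (j + 1) by omega]
    rw [P.app_pts_add hss' hm j, P.app_pts_add hss' hm (j+1)]

end TM
section Chain
variable {n k : ℕ} (F : ℝ → En n → En k → Set (En n)) (xbar : ℝ → En n) (A : Set (En k))

theorem hdist_chain {α : Type*} [PseudoEMetricSpace α] (g : ℕ → Set α) (m : ℕ) :
    EMetric.hausdorffEdist (g m) (g 0) ≤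
      ∑ j ∈ Finset.range m, EMetric.hausdorffEdist (g (j+1)) (g j) := by
  induction m with
  | zero => simp [EMetric.hausdorffEdist, EMetric.hausdorffEdist_self]
  | succ m ih =>
    rw [Finset.sum_range_succ]
    calc EMetric.hausdorffEdist (g (m+1)) (g 0)
        ≤ EMetric.hausdorffEdist (g (m+1)) (g m) + EMetric.hausdorffEdist (g m) (g 0) :=
          EMetric.hausdorffEdist_triangle
      _ ≤ EMetric.hausdorffEdist (g (m+1)) (g m)
            + ∑ j ∈ Finset.range m, EMetric.hausdorffEdist (g (j+1)) (g j) :=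
          add_le_add_right ih _
      _ = _ := by ring

/-- Bounding a one-interval sup term by the sum over a uniform subdivision. -/
theorem sup_le_subdiv (δ : ℝ) {s s' : ℝ} (m : ℕ) (hm : 0 < m) (U : Set (En n))
    (hU : ∀ j < m, U ⊆ xbar '' Set.Icc (unifpts s s' m j) (unifpts s s' m (j+1))
        + Metric.closedBall (0 : En n) δ) :
    (⨆ x ∈ U, ⨆ a ∈ A, EMetric.hausdorffEdist (F s' x a) (F s x a))
      ≤ ∑ j ∈ Finset.range m, tm F xbar A δ (unifpts s s' m j) (unifpts s s' m (j+1)) := by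
  refine iSup₂_le fun x hx => iSup₂_le fun a ha => ?_
  have h0 : F s x a = F (unifpts s s' m 0) x a := by rw [unifpts_zero]
  have hl : F s' x a = F (unifpts s s' m m) x a := by rw [unifpts_last s s' hm]
  calc EMetric.hausdorffEdist (F s' x a) (F s x a)
      ≤ ∑ j ∈ Finset.range m,
          EMetric.hausdorffEdist (F (unifpts s s' m (j+1)) x a) (F (unifpts s s' m j) x a) := by
        rw [h0, hl]; exact hdist_chain (fun j => F (unifpts s s' m j) x a) m
    _ ≤ _ := by
        refine Finset.sum_le_sum fun j hj => ?_
        rw [Finset.mem_range] at hj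
        refine le_trans (le_iSup₂ (f := fun a (_ : a ∈ A) =>
          EMetric.hausdorffEdist (F (unifpts s s' m (j+1)) x a) (F (unifpts s s' m j) x a)) a ha) ?_
        exact le_iSup₂ (f := fun x (_ : x ∈ xbar '' Set.Icc (unifpts s s' m j) (unifpts s s' m (j+1))
          + Metric.closedBall (0 : En n) δ) => ⨆ a ∈ A,
          EMetric.hausdorffEdist (F (unifpts s s' m (j+1)) x a) (F (unifpts s s' m j) x a))
          x (hU j hj hx)

/-! ### Region inclusions -/

theorem add_ball_subset_add_ball {s s' r r' δ' δ : ℝ} (hδ' : 0 ≤ δ') (hrr' : r ≤ r')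
    (h : ∀ u ∈ Set.Icc s s', dist (xbar u) (xbar r) ≤ δ - δ') :
    xbar '' Set.Icc s s' + Metric.closedBall (0 : En n) δ'
      ⊆ xbar '' Set.Icc r r' + Metric.closedBall (0 : En n) δ := by
  rintro z hz
  rw [Set.mem_add] at hz
  obtain ⟨w, ⟨u, hu, rfl⟩, b, hb, rfl⟩ := hz
  rw [Set.mem_add]
  refine ⟨xbar r, ⟨r, ⟨le_rfl, hrr'⟩, rfl⟩, xbar u + b - xbar r, ?_, by abel⟩
  rw [Metric.mem_closedBall, dist_zero_right]
  rw [Metric.mem_closedBall, dist_zero_right] at hb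
  have h1 : ‖xbar u + b - xbar r‖ ≤ ‖xbar u - xbar r‖ + ‖b‖ := by
    have : xbar u + b - xbar r = (xbar u - xbar r) + b := by abel
    rw [this]; exact norm_add_le _ _
  have h2 : ‖xbar u - xbar r‖ ≤ δ - δ' := by rw [← dist_eq_norm]; exact h u hu
  linarith

theorem ball_subset_add_ball {T r r' δ₂ δ : ℝ} (hrr' : r ≤ r')
    (h : dist (xbar r) (xbar T) ≤ δ - δ₂) :
    Metric.closedBall (xbar T) δ₂ ⊆ xbar '' Set.Icc r r' + Metric.closedBall (0 : En n) δ := by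
  intro z hz
  rw [Metric.mem_closedBall] at hz
  rw [Set.mem_add]
  refine ⟨xbar r, ⟨r, ⟨le_rfl, hrr'⟩, rfl⟩, z - xbar r, ?_, by abel⟩
  rw [Metric.mem_closedBall, dist_zero_right]
  have h1 : ‖z - xbar r‖ ≤ ‖z - xbar T‖ + ‖xbar T - xbar r‖ := by
    have : z - xbar r = (z - xbar T) + (xbar T - xbar r) := by abel
    rw [this]; exact norm_add_le _ _
  have h2 : ‖z - xbar T‖ ≤ δ₂ := by rw [← dist_eq_norm]; exact hz
  have h3 : ‖xbar T - xbar r‖ ≤ δ - δ₂ := by rw [← dist_eq_norm, dist_comm]; exact h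
  linarith

theorem add_ball_subset_ball {s T δ' ρ : ℝ} (hsT : s ≤ T)
    (h : ∀ u ∈ Set.Icc s T, dist (xbar u) (xbar T) ≤ ρ) :
    xbar '' Set.Icc s T + Metric.closedBall (0 : En n) δ'
      ⊆ Metric.closedBall (xbar T) (δ' + ρ) := by
  rintro z hz
  rw [Set.mem_add] at hz
  obtain ⟨w, ⟨u, hu, rfl⟩, b, hb, rfl⟩ := hz
  rw [Metric.mem_closedBall]
  rw [Metric.mem_closedBall, dist_zero_right] at hb
  have h1 : dist (xbar u + b) (xbar T) ≤ ‖b‖ + dist (xbar u) (xbar T) := by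
    rw [dist_eq_norm, dist_eq_norm]
    have : xbar u + b - xbar T = b + (xbar u - xbar T) := by abel
    rw [this]; exact norm_add_le _ _
  have := h u hu
  linarith

end Chain
section Eta
variable {n k : ℕ} (F : ℝ → En n → En k → Set (En n)) (xbar : ℝ → En n) (A : Set (En k))

theorem etaEps_self (δ ε S : ℝ) : mvEtaEps F xbar A δ ε S S = 0 := by
  refine le_antisymm (iSup₂_le fun P _ => absurd P.S_lt (lt_irrefl S)) zero_le

theorem mvSum_le_etaEps (δ ε : ℝ) {S t : ℝ} (P : IntervalPartition S t) (hP : P.diamLE ε) :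
    mvSum F xbar A δ P ≤ mvEtaEps F xbar A δ ε S t :=
  le_iSup₂ (f := fun (P : IntervalPartition S t) (_ : P.diamLE ε) => mvSum F xbar A δ P) P hP

/-- Appending a uniform subdivision of `[s,s']` to the supremum over partitions of `[S,s]`. -/
theorem eta_step (δ ε : ℝ) {S s s' : ℝ} (hSs : S ≤ s) (hss' : s < s')
    {m : ℕ} (hm : 0 < m) (hdiam : (s' - s) / m ≤ ε) :
    mvEtaEps F xbar A δ ε S s
      + ∑ j ∈ Finset.range m, tm F xbar A δ (unifpts s s' m j) (unifpts s s' m (j+1))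
      ≤ mvEtaEps F xbar A δ ε S s' := by
  rcases eq_or_lt_of_le hSs with h | h
  · subst h
    rw [etaEps_self, zero_add]
    have := mvSum_le_etaEps F xbar A δ ε (unifP S s' hss' m hm) (unifP_diamLE hss' hm hdiam)
    rwa [mvSum_eq_sum_tm] at this
  · have hne : ∃ P : IntervalPartition S s, P.diamLE ε := by
      have hε : 0 < ε := lt_of_lt_of_le (div_pos (by linarith) (Nat.cast_pos.mpr hm)) hdiam
      obtain ⟨m', hm', hd'⟩ := exists_nat_div_le (by linarith : (0:ℝ) ≤ s - S) hε
      exact ⟨unifP S s h m' hm', unifP_diamLE h hm' hd'⟩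
    rw [mvEtaEps, ENNReal.biSup_add' hne]
    refine iSup₂_le fun P hP => ?_
    rw [← mvSum_app]
    exact mvSum_le_etaEps F xbar A δ ε (P.app s' hss' m hm) (P.app_diamLE hss' hm hP hdiam)

theorem etaEps_mono_t (δ : ℝ) {ε : ℝ} (hε : 0 < ε) {S t t' : ℝ} (hSt : S ≤ t) (htt' : t ≤ t') :
    mvEtaEps F xbar A δ ε S t ≤ mvEtaEps F xbar A δ ε S t' := by
  rcases eq_or_lt_of_le htt' with h | h
  · subst h; exact le_rfl
  · obtain ⟨m, hm, hd⟩ := exists_nat_div_le (by linarith : (0:ℝ) ≤ t' - t) hε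
    exact le_trans le_self_add (eta_step F xbar A δ ε hSt h hm hd)

theorem etaEps_mono_eps (δ : ℝ) {ε ε' : ℝ} (h : ε ≤ ε') (S t : ℝ) :
    mvEtaEps F xbar A δ ε S t ≤ mvEtaEps F xbar A δ ε' S t :=
  iSup₂_le fun P hP => mvSum_le_etaEps F xbar A δ ε' P (fun i hi => le_trans (hP i hi) h)

theorem etaDelta_le_etaEps (δ : ℝ) {ε : ℝ} (hε : 0 < ε) (S t : ℝ) :
    mvEtaDelta F xbar A δ S t ≤ mvEtaEps F xbar A δ ε S t :=
  iInf₂_le ε hε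

theorem etaDelta_mono_t (δ : ℝ) {S t t' : ℝ} (hSt : S ≤ t) (htt' : t ≤ t') :
    mvEtaDelta F xbar A δ S t ≤ mvEtaDelta F xbar A δ S t' :=
  le_iInf₂ fun ε hε => le_trans (etaDelta_le_etaEps F xbar A δ hε S t)
    (etaEps_mono_t F xbar A δ hε hSt htt')

/-- Key refinement estimate: the `δ'`-sum over the first `j` intervals of a partition is
bounded by `η^δ_{ε'}` at the `j`-th point, for every `ε' > 0`, provided the oscillation of
`x̄` on each subinterval is at most `δ - δ'`. -/
theorem sum_le_eta {δ δ' ε' : ℝ} (hδ' : 0 ≤ δ') (hε' : 0 < ε')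
    {S T' : ℝ} (P : IntervalPartition S T')
    (hosc : ∀ i < P.N, ∀ u ∈ Set.Icc (P.pts i) (P.pts (i+1)),
       ∀ v ∈ Set.Icc (P.pts i) (P.pts (i+1)), dist (xbar u) (xbar v) ≤ δ - δ') :
    ∀ j, j ≤ P.N → (∑ i ∈ Finset.range j, tm F xbar A δ' (P.pts i) (P.pts (i+1)))
      ≤ mvEtaEps F xbar A δ ε' S (P.pts j) := by
  intro j
  induction j with
  | zero => intro _; simp
  | succ j ih =>
    intro hj
    have hj' : j ≤ P.N := by omega
    have hjlt : j < P.N := hj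
    have hlt : P.pts j < P.pts (j+1) := P.mono j hjlt
    obtain ⟨m, hm, hd⟩ := exists_nat_div_le (by linarith : (0:ℝ) ≤ P.pts (j+1) - P.pts j) hε'
    have hSj : S ≤ P.pts j := (ppts_mem P hj').1
    rw [Finset.sum_range_succ]
    have hterm : tm F xbar A δ' (P.pts j) (P.pts (j+1))
        ≤ ∑ l ∈ Finset.range m, tm F xbar A δ
            (unifpts (P.pts j) (P.pts (j+1)) m l) (unifpts (P.pts j) (P.pts (j+1)) m (l+1)) := by
      apply sup_le_subdiv _ _ _ _ _ hm
      intro l hl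
      apply add_ball_subset_add_ball xbar hδ'
      · exact unifpts_mono hlt hm (Nat.le_succ l)
      · intro u hu
        exact hosc j hjlt u hu _ (unifpts_mem hlt hm (by omega : l ≤ m))
    calc (∑ i ∈ Finset.range j, tm F xbar A δ' (P.pts i) (P.pts (i+1)))
          + tm F xbar A δ' (P.pts j) (P.pts (j+1))
        ≤ mvEtaEps F xbar A δ ε' S (P.pts j) + ∑ l ∈ Finset.range m, tm F xbar A δ
            (unifpts (P.pts j) (P.pts (j+1)) m l) (unifpts (P.pts j) (P.pts (j+1)) m (l+1)) :=
          add_le_add (ih hj') hterm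
      _ ≤ mvEtaEps F xbar A δ ε' S (P.pts (j+1)) := eta_step F xbar A δ ε' hSj hlt hm hd

end Eta
section LeftLimApprox

open EMetric

theorem exists_seq_of_step {α : Type*} [PseudoEMetricSpace α] (G : ℕ → Set α) (d : ℕ → ℝ≥0∞)
    (h : ∀ j, ∀ p ∈ G j, ∃ q ∈ G (j+1), edist p q ≤ d j) {p0 : α} (hp0 : p0 ∈ G 0) :
    ∃ u : ℕ → α, u 0 = p0 ∧ (∀ j, u j ∈ G j) ∧ ∀ j, edist (u j) (u (j+1)) ≤ d j := by
  have step : ∀ j (p : {p // p ∈ G j}), {q : {q // q ∈ G (j+1)} // edist p.1 q.1 ≤ d j} :=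
    fun j p => ⟨⟨Classical.choose (h j p.1 p.2), (Classical.choose_spec (h j p.1 p.2)).1⟩,
      (Classical.choose_spec (h j p.1 p.2)).2⟩
  let v : ∀ j, {p // p ∈ G j} := fun j => Nat.rec ⟨p0, hp0⟩ (fun j p => (step j p).1) j
  exact ⟨fun j => (v j).1, rfl, fun j => (v j).2, fun j => (step j (v j)).2⟩

/-- Geometric sequence `θ·2⁻ʲ` in `ℝ≥0∞`. -/
noncomputable def geo (θ : ℝ≥0∞) (j : ℕ) : ℝ≥0∞ := θ * 2⁻¹ ^ j

theorem geo_zero (θ : ℝ≥0∞) : geo θ 0 = θ := by simp [geo]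

theorem geo_pos {θ : ℝ≥0∞} (hθ : θ ≠ 0) (j : ℕ) : 0 < geo θ j :=
  ENNReal.mul_pos hθ (pow_ne_zero j (by simp))

theorem geo_ne_top {θ : ℝ≥0∞} (hθ : θ ≠ ⊤) (j : ℕ) : geo θ j ≠ ⊤ :=
  ENNReal.mul_ne_top hθ (ENNReal.pow_ne_top (by simp [ENNReal.inv_ne_top]))

theorem tsum_inv_two_pow : ∑' i : ℕ, ((2 : ℝ≥0∞))⁻¹ ^ i = 2 := by
  rw [ENNReal.tsum_geometric, ENNReal.one_sub_inv_two, inv_inv]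

theorem geo_tsum (θ : ℝ≥0∞) : ∑' j, geo θ j = 2 * θ := by
  simp only [geo]
  rw [ENNReal.tsum_mul_left, tsum_inv_two_pow]; ring

theorem geo_tail (θ : ℝ≥0∞) (j : ℕ) : ∑' i, geo θ (j + 1 + i) = geo θ j := by
  have h1 : ∀ i, geo θ (j + 1 + i) = (θ * 2⁻¹ ^ (j+1)) * 2⁻¹ ^ i := by
    intro i; simp only [geo, pow_add]; ring
  rw [tsum_congr h1, ENNReal.tsum_mul_left, tsum_inv_two_pow]
  have hhalf : (2 : ℝ≥0∞)⁻¹ * 2 = 1 := ENNReal.inv_mul_cancel (by norm_num) (by norm_num)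
  calc θ * 2⁻¹ ^ (j+1) * 2 = θ * 2⁻¹ ^ j * (2⁻¹ * 2) := by rw [pow_succ]; ring
    _ = geo θ j := by rw [hhalf, mul_one, geo]

theorem geo_two_mul (θ : ℝ≥0∞) (j : ℕ) : geo (2 * θ) j = 2 * geo θ j := by
  simp only [geo]; ring

theorem exists_geo_le {θ ε : ℝ≥0∞} (hθ : θ ≠ ⊤) (hε : ε ≠ 0) : ∃ j, geo θ j ≤ ε := by
  rcases eq_or_ne θ 0 with h | h
  · exact ⟨0, by simp [geo, h]⟩
  · have hne : ε / θ ≠ 0 := ENNReal.div_ne_zero.mpr ⟨hε, hθ⟩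
    obtain ⟨j, hj⟩ := ENNReal.exists_inv_two_pow_lt hne
    refine ⟨j, ?_⟩
    calc geo θ j = θ * 2⁻¹ ^ j := rfl
      _ ≤ θ * (ε / θ) := mul_le_mul_right hj.le θ
      _ ≤ ε := ENNReal.mul_div_le

end LeftLimApprox
section LeftLimMain
variable {n k : ℕ} (F : ℝ → En n → En k → Set (En n)) (xbar : ℝ → En n) (A : Set (En k))

/-- Uniform approximation of `F` near `T⁻` by its set-valued left limit, given a uniform
Cauchy property. -/
theorem leftLim_approx {S T δ₂ : ℝ} (hST : S < T)
    (hcau : ∀ ρ : ℝ≥0∞, 0 < ρ → ∃ c, S ≤ c ∧ c < T ∧ ∀ p q, c < p → p < T → c < q → q < T →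
      ∀ x ∈ Metric.closedBall (xbar T) δ₂, ∀ a ∈ A,
        EMetric.hausdorffEdist (F p x a) (F q x a) ≤ ρ)
    {θ : ℝ≥0∞} (hθ0 : θ ≠ 0) (hθt : θ ≠ ⊤) :
    ∃ c, S ≤ c ∧ c < T ∧ ∀ s, c < s → s < T → ∀ x ∈ Metric.closedBall (xbar T) δ₂, ∀ a ∈ A,
      EMetric.hausdorffEdist (F s x a) (leftLim F S T x a) ≤ 4 * θ := by
  have hρ : ∀ j : ℕ, 0 < geo θ j := geo_pos hθ0
  choose c hcS hcT hc using fun j => hcau (geo θ j) (hρ j)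
  -- monotone envelope of the thresholds
  let e : ℕ → ℝ := fun j => Nat.rec (c 0) (fun j ej => max ej (c (j+1))) j
  have he_succ : ∀ j, e (j+1) = max (e j) (c (j+1)) := fun j => rfl
  have he_mono : Monotone e := monotone_nat_of_le_succ fun j => by rw [he_succ]; exact le_max_left _ _
  have hce : ∀ j, c j ≤ e j := by
    intro j; cases j with
    | zero => exact le_rfl
    | succ j => rw [he_succ]; exact le_max_right _ _
  have heT : ∀ j, e j < T := by
    intro j; induction j with
    | zero => exact hcT 0
    | succ j ih => rw [he_succ]; exact max_lt ih (hcT (j+1))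
  have heS : S ≤ e 0 := hcS 0
  have hpair : ∀ j p q, e j < p → p < T → e j < q → q < T →
      ∀ x ∈ Metric.closedBall (xbar T) δ₂, ∀ a ∈ A,
        EMetric.hausdorffEdist (F p x a) (F q x a) ≤ geo θ j := by
    intro j p q h1 h2 h3 h4
    exact hc j p q (lt_of_le_of_lt (hce j) h1) h2 (lt_of_le_of_lt (hce j) h3) h4
  refine ⟨e 0, heS, heT 0, ?_⟩
  intro s hs hsT x hx a ha
  -- the auxiliary increasing sequence of times
  let w : ℕ → ℝ := fun j => match j with
    | 0 => s
    | (j+1) => max s ((e (j+1) + T)/2)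
  have hw0 : w 0 = s := rfl
  have hw : ∀ j, e j < w j ∧ w j < T := by
    intro j; cases j with
    | zero => exact ⟨hs, hsT⟩
    | succ j =>
      constructor
      · exact lt_max_of_lt_right (by linarith [heT (j+1)])
      · exact max_lt hsT (by linarith [heT (j+1)])
  -- distance estimates between consecutive values
  have hstep : ∀ j, ∀ p ∈ F (w j) x a, ∃ q ∈ F (w (j+1)) x a,
      edist p q ≤ geo (2 * θ) j := by
    intro j p hp
    have hd : EMetric.hausdorffEdist (F (w j) x a) (F (w (j+1)) x a) ≤ geo θ j := by
      refine hpair j (w j) (w (j+1)) (hw j).1 (hw j).2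
        (lt_of_le_of_lt (he_mono (Nat.le_succ j)) (hw (j+1)).1) (hw (j+1)).2 x hx a ha
    have hlt : EMetric.infEdist p (F (w (j+1)) x a) < geo (2 * θ) j := by
      refine lt_of_le_of_lt (le_trans (EMetric.infEdist_le_hausdorffEdist_of_mem hp) hd) ?_
      rw [geo_two_mul, two_mul]
      exact ENNReal.lt_add_right (geo_ne_top hθt j) (hρ j).ne'
    obtain ⟨q, hq, hq2⟩ := EMetric.infEdist_lt_iff.mp hlt
    exact ⟨q, hq, hq2.le⟩
  -- the filter is non-trivial
  have hNeBot : (𝓝[Set.Ico S T] T).NeBot := by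
    apply mem_closure_iff_nhdsWithin_neBot.mp
    rw [closure_Ico hST.ne]
    exact Set.right_mem_Icc.mpr hST.le
  -- upper estimate for points of the left limit
  have hside2 : ∀ v ∈ leftLim F S T x a, EMetric.infEdist v (F s x a) ≤ θ := by
    intro v hv
    have hv' : Filter.Tendsto (fun r => EMetric.infEdist v (F r x a)) (𝓝[Set.Ico S T] T) (𝓝 0) := hv
    apply ENNReal.le_of_forall_pos_le_add
    intro εv hεv _
    have h1 : ∀ᶠ r in 𝓝[Set.Ico S T] T, EMetric.infEdist v (F r x a) ≤ (εv : ℝ≥0∞) :=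
      ENNReal.tendsto_nhds_zero.mp hv' (εv : ℝ≥0∞) (by exact_mod_cast hεv)
    have h2 : ∀ᶠ r in 𝓝[Set.Ico S T] T, r ∈ Set.Ioi (e 0) :=
      mem_nhdsWithin_of_mem_nhds (Ioi_mem_nhds (heT 0))
    have h3 : ∀ᶠ r in 𝓝[Set.Ico S T] T, r ∈ Set.Ico S T := self_mem_nhdsWithin
    obtain ⟨r, hr1, hr2, hr3⟩ := (h1.and (h2.and h3)).exists
    calc EMetric.infEdist v (F s x a)
        ≤ EMetric.infEdist v (F r x a)
            + EMetric.hausdorffEdist (F r x a) (F s x a) :=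
          EMetric.infEdist_le_infEdist_add_hausdorffEdist
      _ ≤ (εv : ℝ≥0∞) + geo θ 0 := by
          refine add_le_add hr1 ?_
          exact hpair 0 r s hr2 hr3.2 hs hsT x hx a ha
      _ = θ + εv := by rw [geo_zero, add_comm]
  -- lower estimate: every point of `F s x a` is close to the left limit
  have hside1 : ∀ p ∈ F s x a, EMetric.infEdist p (leftLim F S T x a) ≤ 4 * θ := by
    intro p hp
    obtain ⟨u, hu0, humem, hud⟩ := exists_seq_of_step (fun j => F (w j) x a) (geo (2*θ))
      hstep (hw0 ▸ hp)
    have hcauchy : CauchySeq u := by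
      refine cauchySeq_of_edist_le_of_tsum_ne_top (geo (2*θ)) hud ?_
      rw [geo_tsum]
      exact ENNReal.mul_ne_top (by norm_num) (ENNReal.mul_ne_top (by norm_num) hθt)
    obtain ⟨v, hv⟩ := cauchySeq_tendsto_of_complete hcauchy
    have hpv : edist p v ≤ 4 * θ := by
      have h0 := edist_le_tsum_of_edist_le_of_tendsto₀ (geo (2*θ)) hud hv
      rw [hu0] at h0
      refine le_trans h0 ?_
      rw [geo_tsum]
      exact le_of_eq (by ring)
    have htail : ∀ j, edist (u (j+1)) v ≤ 2 * geo θ j := by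
      intro j
      have h0 := edist_le_tsum_of_edist_le_of_tendsto (geo (2*θ)) hud hv (j+1)
      have h1 : (∑' i, geo (2*θ) (j + 1 + i)) = 2 * geo θ j := by
        rw [geo_tail (2*θ) j, geo_two_mul]
      exact le_trans h0 (le_of_eq h1)
    have hvmem : v ∈ leftLim F S T x a := by
      show Filter.Tendsto (fun r => EMetric.infEdist v (F r x a)) (𝓝[Set.Ico S T] T) (𝓝 0)
      rw [ENNReal.tendsto_nhds_zero]
      intro ε hε
      obtain ⟨j, hj⟩ := exists_geo_le (θ := 3 * θ)
        (ENNReal.mul_ne_top (by norm_num) hθt) hε.ne'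
      have h2 : ∀ᶠ r in 𝓝[Set.Ico S T] T, r ∈ Set.Ioi (e j) :=
        mem_nhdsWithin_of_mem_nhds (Ioi_mem_nhds (heT j))
      filter_upwards [h2, self_mem_nhdsWithin] with r hr1 hr2
      have hdr : EMetric.hausdorffEdist (F (w (j+1)) x a) (F r x a) ≤ geo θ j := by
        refine hpair j (w (j+1)) r
          (lt_of_le_of_lt (he_mono (Nat.le_succ j)) (hw (j+1)).1) (hw (j+1)).2 hr1 hr2.2 x hx a ha
      calc EMetric.infEdist v (F r x a)
          ≤ edist v (u (j+1)) + EMetric.infEdist (u (j+1)) (F r x a) :=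
            EMetric.infEdist_le_edist_add_infEdist
        _ ≤ 2 * geo θ j + geo θ j := by
            refine add_le_add ?_ ?_
            · rw [edist_comm]; exact htail j
            · exact le_trans (EMetric.infEdist_le_hausdorffEdist_of_mem (humem (j+1))) hdr
        _ = geo (3 * θ) j := by simp only [geo]; ring
        _ ≤ ε := hj
    exact le_trans (EMetric.infEdist_le_edist_of_mem hvmem) hpv
  refine EMetric.hausdorffEdist_le_of_infEdist hside1 ?_
  intro v hv
  refine le_trans (hside2 v hv) ?_
  calc θ = 1 * θ := (one_mul θ).symm
    _ ≤ 4 * θ := mul_le_mul_left (by norm_num) θ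

end LeftLimMain

/-- Under bounded variation along `x̄` uniformly over `A`,
`η^δ̄_ε̄(T) < ∞`, (C1) and (C2), for every `0 < δ' < δ < δ̄`:
`η^{δ'}(T) ≤ lim_{T'↑T} η^δ(T') + sup{ d_H(F(T,x,a), F(T⁻,x,a)) : x ∈ x̄(T)+δ𝔹, a ∈ A }`
(the left limit of the increasing function `η^δ` being its supremum over `[S,T)`). -/
theorem statement8 {n k : ℕ} (F : ℝ → En n → En k → Set (En n))
    (xbar : ℝ → En n) (A : Set (En k)) (S T : ℝ) (hST : S < T)
    (hA : IsCompact A) (hx : ContinuousOn xbar (Set.Icc S T))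
    (hBV : HasBVAlongUniformly F xbar A S T)
    (δbar εbar : ℝ) (hδbar : 0 < δbar) (hεbar : 0 < εbar)
    (hfin : mvEtaEps F xbar A δbar εbar S T < ⊤)
    (hC1 : HypC1 F xbar A S T δbar) (hC2 : HypC2 F xbar A S T δbar) :
    ∀ δ ∈ Set.Ioo 0 δbar, ∀ δ' ∈ Set.Ioo 0 δ,
      mvEtaDelta F xbar A δ' S T ≤
        (⨆ T' ∈ Set.Ico S T, mvEtaDelta F xbar A δ S T') +
          ⨆ x ∈ Metric.closedBall (xbar T) δ, ⨆ a ∈ A,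
            EMetric.hausdorffEdist (F T x a) (leftLim F S T x a) := by
  intro δ hδ δ' hδ'
  obtain ⟨hδ0, hδδbar⟩ := hδ
  obtain ⟨hδ'0, hδ'δ⟩ := hδ'
  set L := ⨆ T' ∈ Set.Ico S T, mvEtaDelta F xbar A δ S T' with hLdef
  set J := ⨆ x ∈ Metric.closedBall (xbar T) δ, ⨆ a ∈ A,
      EMetric.hausdorffEdist (F T x a) (leftLim F S T x a) with hJdef
  rcases eq_or_ne L ⊤ with hL | hL
  · rw [hL, top_add]; exact le_top
  rcases eq_or_ne J ⊤ with hJtop | hJtop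
  · rw [hJtop, add_top]; exact le_top
  -- uniform continuity of `x̄` on `[S,T]`
  have hUC : ∀ ρ : ℝ, 0 < ρ → ∃ ε₀ > 0, ∀ u ∈ Set.Icc S T, ∀ v ∈ Set.Icc S T,
      |u - v| ≤ ε₀ → dist (xbar u) (xbar v) ≤ ρ := by
    intro ρ hρ
    have huc := (isCompact_Icc : IsCompact (Set.Icc S T)).uniformContinuousOn_of_continuous hx
    rw [Metric.uniformContinuousOn_iff] at huc
    obtain ⟨d0, hd0, hball⟩ := huc ρ hρ
    refine ⟨d0/2, by linarith, ?_⟩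
    intro u hu v hv huv
    have hlt : dist u v < d0 := by rw [Real.dist_eq]; linarith
    exact (hball u hu v hv hlt).le
  set ρ₀ := (δ - δ')/2 with hρ₀def
  have hρ₀ : 0 < ρ₀ := by rw [hρ₀def]; linarith
  set δ₂ := δ' + ρ₀ with hδ₂def
  have hδ₂δ : δ₂ ≤ δ := by rw [hδ₂def, hρ₀def]; linarith
  have hδδ₂ : ρ₀ ≤ δ - δ₂ := by rw [hδ₂def, hρ₀def]; linarith
  obtain ⟨ε₁, hε₁, hosc⟩ := hUC ρ₀ hρ₀
  -- the uniform Cauchy property near `T⁻`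
  have hcau : ∀ ρ : ℝ≥0∞, 0 < ρ → ∃ c, S ≤ c ∧ c < T ∧ ∀ p q, c < p → p < T → c < q → q < T →
      ∀ x ∈ Metric.closedBall (xbar T) δ₂, ∀ a ∈ A,
        EMetric.hausdorffEdist (F p x a) (F q x a) ≤ ρ := by
    intro ρ hρ
    obtain ⟨T₀, hT₀mem, hT₀⟩ : ∃ T₀ ∈ Set.Ico S T, L ≤ mvEtaDelta F xbar A δ S T₀ + ρ := by
      rcases le_or_gt L ρ with h | h
      · exact ⟨S, ⟨le_rfl, hST⟩, le_trans h le_add_self⟩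
      · have hL0 : L ≠ 0 := by
          intro h0
          rw [h0] at h
          exact ENNReal.not_lt_zero h
        have h1 : L - ρ < L := ENNReal.sub_lt_self hL hL0 hρ.ne'
        rw [hLdef] at h1
        simp only [lt_iSup_iff] at h1
        obtain ⟨T₀, hT₀mem, h2⟩ := h1
        refine ⟨T₀, hT₀mem, ?_⟩
        calc L = L - ρ + ρ := (tsub_add_cancel_of_le h.le).symm
          _ ≤ _ := add_le_add_left h2.le ρ
    set c := max T₀ (max (T - ε₁) S) with hcdef
    have hcS : S ≤ c := le_max_of_le_right (le_max_right _ _)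
    have hcT : c < T := max_lt hT₀mem.2 (max_lt (by linarith) hST)
    have hcT₀ : T₀ ≤ c := le_max_left _ _
    have hcε₁ : T - ε₁ ≤ c := le_max_of_le_right (le_max_left _ _)
    refine ⟨c, hcS, hcT, ?_⟩
    have key : ∀ p q, c < p → p < T → c < q → q < T → p < q →
        ∀ x ∈ Metric.closedBall (xbar T) δ₂, ∀ a ∈ A,
        EMetric.hausdorffEdist (F q x a) (F p x a) ≤ ρ := by
      intro p q hp hpT hq hqT hpq x hx a ha
      set V := ⨆ x' ∈ Metric.closedBall (xbar T) δ₂, ⨆ a' ∈ A,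
        EMetric.hausdorffEdist (F q x' a') (F p x' a') with hVdef
      have hJterm : ∀ ε'' : ℝ, 0 < ε'' → V + mvEtaEps F xbar A δ ε'' S p
          ≤ mvEtaEps F xbar A δ ε'' S q := by
        intro ε'' hε''
        obtain ⟨m, hm, hd⟩ := exists_nat_div_le (by linarith : (0:ℝ) ≤ q - p) hε''
        have hsub : V ≤ ∑ j ∈ Finset.range m,
            tm F xbar A δ (unifpts p q m j) (unifpts p q m (j+1)) := by
          apply sup_le_subdiv _ _ _ _ _ hm
          intro l hl
          apply ball_subset_add_ball xbar (unifpts_mono hpq hm (Nat.le_succ l))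
          have hmem := unifpts_mem hpq hm (le_of_lt hl)
          have hu1 : S ≤ unifpts p q m l := le_trans (le_of_lt (lt_of_le_of_lt hcS hp)) hmem.1
          have hu2 : unifpts p q m l ≤ T := le_trans hmem.2 hqT.le
          have habs : |unifpts p q m l - T| ≤ ε₁ := by
            rw [abs_le]
            constructor <;> [linarith [hmem.1]; linarith]
          have := hosc (unifpts p q m l) ⟨hu1, hu2⟩ T ⟨hST.le, le_rfl⟩ habs
          linarith
        calc V + mvEtaEps F xbar A δ ε'' S p
            ≤ (∑ j ∈ Finset.range m, tm F xbar A δ (unifpts p q m j) (unifpts p q m (j+1)))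
              + mvEtaEps F xbar A δ ε'' S p := add_le_add_left hsub _
          _ = mvEtaEps F xbar A δ ε'' S p
              + ∑ j ∈ Finset.range m, tm F xbar A δ (unifpts p q m j) (unifpts p q m (j+1)) :=
            add_comm _ _
          _ ≤ mvEtaEps F xbar A δ ε'' S q :=
            eta_step F xbar A δ ε'' (le_of_lt (lt_of_le_of_lt hcS hp)) hpq hm hd
      have h2 : V + mvEtaDelta F xbar A δ S p ≤ mvEtaDelta F xbar A δ S q := by
        refine le_iInf₂ fun ε'' hε'' => ?_
        calc V + mvEtaDelta F xbar A δ S p ≤ V + mvEtaEps F xbar A δ ε'' S p :=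
              add_le_add_right (etaDelta_le_etaEps F xbar A δ hε'' S p) V
          _ ≤ mvEtaEps F xbar A δ ε'' S q := hJterm ε'' hε''
      have h3 : mvEtaDelta F xbar A δ S q ≤ L := by
        rw [hLdef]
        exact le_iSup₂ (f := fun T' (_ : T' ∈ Set.Ico S T) => mvEtaDelta F xbar A δ S T') q
          ⟨le_of_lt (lt_of_le_of_lt hcS hq), hqT⟩
      have hpL : mvEtaDelta F xbar A δ S p ≤ L := by
        rw [hLdef]
        exact le_iSup₂ (f := fun T' (_ : T' ∈ Set.Ico S T) => mvEtaDelta F xbar A δ S T') p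
          ⟨le_of_lt (lt_of_le_of_lt hcS hp), hpT⟩
      have h4 : mvEtaDelta F xbar A δ S T₀ ≤ mvEtaDelta F xbar A δ S p :=
        etaDelta_mono_t F xbar A δ hT₀mem.1 (le_of_lt (lt_of_le_of_lt hcT₀ hp))
      have h5 : V + mvEtaDelta F xbar A δ S p ≤ ρ + mvEtaDelta F xbar A δ S p :=
        calc V + mvEtaDelta F xbar A δ S p ≤ mvEtaDelta F xbar A δ S q := h2
          _ ≤ L := h3
          _ ≤ mvEtaDelta F xbar A δ S T₀ + ρ := hT₀
          _ ≤ mvEtaDelta F xbar A δ S p + ρ := add_le_add_left h4 ρ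
          _ = ρ + mvEtaDelta F xbar A δ S p := add_comm _ _
      have hfinp : mvEtaDelta F xbar A δ S p ≠ ⊤ := ne_top_of_le_ne_top hL hpL
      have h6 : V ≤ ρ := (ENNReal.add_le_add_iff_right hfinp).mp h5
      refine le_trans ?_ h6
      rw [hVdef]
      refine le_trans (le_iSup₂ (f := fun a' (_ : a' ∈ A) =>
        EMetric.hausdorffEdist (F q x a') (F p x a')) a ha) ?_
      exact le_iSup₂ (f := fun x' (_ : x' ∈ Metric.closedBall (xbar T) δ₂) => ⨆ a' ∈ A,
        EMetric.hausdorffEdist (F q x' a') (F p x' a')) x hx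
    intro p q hp hpT hq hqT x hx a ha
    rcases lt_trichotomy p q with h | h | h
    · rw [EMetric.hausdorffEdist, EMetric.hausdorffEdist_comm]
      exact key p q hp hpT hq hqT h x hx a ha
    · subst h; rw [EMetric.hausdorffEdist, EMetric.hausdorffEdist_self]; exact zero_le
    · exact key q p hq hqT hp hpT h x hx a ha
  -- main estimate
  apply ENNReal.le_of_forall_pos_le_add
  intro θ hθ _
  set θ4 : ℝ≥0∞ := (θ : ℝ≥0∞)/4 with hθ4def
  have hθ40 : θ4 ≠ 0 := ENNReal.div_ne_zero.mpr ⟨ENNReal.coe_ne_zero.mpr hθ.ne', by norm_num⟩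
  have hθ4t : θ4 ≠ ⊤ := (ENNReal.div_lt_top ENNReal.coe_ne_top (by norm_num)).ne
  have h4θ : 4 * θ4 ≤ (θ : ℝ≥0∞) := by
    rw [hθ4def]; exact ENNReal.mul_div_le
  obtain ⟨c₀, hc₀S, hc₀T, happrox⟩ := leftLim_approx F xbar A hST hcau hθ40 hθ4t
  set ε := min ε₁ (min ((T - c₀)/2) ((T - S)/2)) with hεdef
  have hε : 0 < ε := by
    rw [hεdef]
    apply lt_min hε₁ (lt_min (by linarith) (by linarith))
  have hεε₁ : ε ≤ ε₁ := min_le_left _ _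
  have hεc₀ : ε ≤ (T - c₀)/2 := le_trans (min_le_right _ _) (min_le_left _ _)
  have hεTS : ε ≤ (T - S)/2 := le_trans (min_le_right _ _) (min_le_right _ _)
  refine le_trans (iInf₂_le ε hε) ?_
  refine iSup₂_le fun P hP => ?_
  have hN2 : 2 ≤ P.N := by
    by_contra hcon
    push_neg at hcon
    have hN1 : P.N = 1 := by have := P.hN; omega
    have hd := hP 0 (by omega)
    rw [show (0:ℕ) + 1 = P.N by omega, P.last, P.first] at hd
    linarith
  obtain ⟨M, hM⟩ : ∃ M, P.N = M + 1 := ⟨P.N - 1, by omega⟩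
  have hM1 : 1 ≤ M := by omega
  have ht'T : P.pts M < T := by
    have h := ppts_lt P (show M < P.N by omega) le_rfl
    rwa [P.last] at h
  have hSt' : S ≤ P.pts M := (ppts_mem P (by omega)).1
  have ht'ge : T - ε ≤ P.pts M := by
    have hd := hP M (by omega)
    rw [show M + 1 = P.N from hM.symm, P.last] at hd
    linarith
  have hc₀t' : c₀ < P.pts M := by
    have : ε < T - c₀ := lt_of_le_of_lt hεc₀ (by linarith)
    linarith
  rw [mvSum_eq_sum_tm, hM, Finset.sum_range_succ]
  have hpart1 : ∑ i ∈ Finset.range M, tm F xbar A δ' (P.pts i) (P.pts (i+1)) ≤ L := by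
    have h1 : ∀ ε'' : ℝ, 0 < ε'' →
        (∑ i ∈ Finset.range M, tm F xbar A δ' (P.pts i) (P.pts (i+1)))
          ≤ mvEtaEps F xbar A δ ε'' S (P.pts M) := by
      intro ε'' hε''
      refine sum_le_eta F xbar A (le_of_lt hδ'0) hε'' P ?_ M (by omega)
      intro i hi u hu v hv
      have hiN : i + 1 ≤ P.N := hi
      have hloi := (ppts_mem P (le_of_lt hi)).1
      have hhii := (ppts_mem P hiN).2
      have hu' : u ∈ Set.Icc S T := ⟨le_trans hloi hu.1, le_trans hu.2 hhii⟩
      have hv' : v ∈ Set.Icc S T := ⟨le_trans hloi hv.1, le_trans hv.2 hhii⟩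
      have hlen : P.pts (i+1) - P.pts i ≤ ε := hP i hi
      have habs : |u - v| ≤ ε₁ := by
        rw [abs_le]
        constructor
        · have := hu.1; have := hv.2; linarith
        · have := hu.2; have := hv.1; linarith
      have := hosc u hu' v hv' habs
      rw [hρ₀def] at this
      linarith
    have h2 : (∑ i ∈ Finset.range M, tm F xbar A δ' (P.pts i) (P.pts (i+1)))
        ≤ mvEtaDelta F xbar A δ S (P.pts M) := le_iInf₂ fun ε'' hε'' => h1 ε'' hε''
    refine le_trans h2 ?_
    rw [hLdef]
    exact le_iSup₂ (f := fun T' (_ : T' ∈ Set.Ico S T) => mvEtaDelta F xbar A δ S T')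
      (P.pts M) ⟨hSt', ht'T⟩
  have hpart2 : tm F xbar A δ' (P.pts M) (P.pts (M+1)) ≤ J + θ := by
    have hlast : P.pts (M+1) = T := by rw [show M + 1 = P.N from hM.symm, P.last]
    rw [hlast]
    refine iSup₂_le fun x hx => iSup₂_le fun a ha => ?_
    have hxball : x ∈ Metric.closedBall (xbar T) δ₂ := by
      refine add_ball_subset_ball xbar ht'T.le ?_ hx
      intro u hu
      have hu' : u ∈ Set.Icc S T := ⟨le_trans hSt' hu.1, hu.2⟩
      have habs : |u - T| ≤ ε₁ := by
        rw [abs_le]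
        constructor
        · have := hu.1; linarith
        · linarith [hu.2]
      exact hosc u hu' T ⟨hST.le, le_rfl⟩ habs
    have hxδ : x ∈ Metric.closedBall (xbar T) δ :=
      Metric.closedBall_subset_closedBall hδ₂δ hxball
    calc EMetric.hausdorffEdist (F T x a) (F (P.pts M) x a)
        ≤ EMetric.hausdorffEdist (F T x a) (leftLim F S T x a)
          + EMetric.hausdorffEdist (leftLim F S T x a) (F (P.pts M) x a) :=
          EMetric.hausdorffEdist_triangle
      _ ≤ J + θ := by
          refine add_le_add ?_ ?_
          · rw [hJdef]
            refine le_trans (le_iSup₂ (f := fun a' (_ : a' ∈ A) =>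
              EMetric.hausdorffEdist (F T x a') (leftLim F S T x a')) a ha) ?_
            exact le_iSup₂ (f := fun x' (_ : x' ∈ Metric.closedBall (xbar T) δ) => ⨆ a' ∈ A,
              EMetric.hausdorffEdist (F T x' a') (leftLim F S T x' a')) x hxδ
          · rw [EMetric.hausdorffEdist, EMetric.hausdorffEdist_comm]
            exact le_trans (happrox (P.pts M) hc₀t' ht'T x hxball a ha) h4θ
  calc (∑ i ∈ Finset.range M, tm F xbar A δ' (P.pts i) (P.pts (i+1)))
        + tm F xbar A δ' (P.pts M) (P.pts (M+1))
      ≤ L + (J + θ) := add_le_add hpart1 hpart2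
    _ = L + J + θ := by rw [add_assoc]

end
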